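/- arXiv:2601.13483 — 2 statements merged into one kernel-verified Lean document; each statement's English description precedes it below -/
import Mathlib

section
/- Let r ≥ 2 be an integer. The poset P_{𝓛×[r]} is pure if and only if for every s ∈ [t] the following hold: (a) u_k − u_i = 2(k − i) for all i, k ∈ [p_s, q_s] with i ≤ k such that ε_i > 1 and ε_k > 1; (b) v_k − v_i = 2(k − i) for all i, k ∈ [p_s, q_s] with i ≤ k such that θ_{i−1} > 1 and θ_{k−1} > 1; (c) r = Δ_{p_s} + i_s − p_s + 1. -/
namespace LadderPaper

/-- The tuple `a_{i,j}`: entry `t` is `u t` for `t < i` and `max (j + (t - i)) (u t)` for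
`t ≥ i` (indices `t ∈ [1,n]`; entries outside `[1,n]` are set to `0`). -/
def atuple (u : ℕ → ℤ) (n i : ℕ) (j : ℤ) : ℕ → ℤ := fun t =>
  if 1 ≤ t ∧ t ≤ n then
    (if t < i then u t else max (j + ((t : ℤ) - (i : ℤ))) (u t))
  else 0

/-- The tuple `b_{i,j}`: like `a_{i,j}` but with `i`-th entry `j - 1`. -/
def btuple (u : ℕ → ℤ) (n i : ℕ) (j : ℤ) : ℕ → ℤ := fun t =>
  if 1 ≤ t ∧ t ≤ n then
    (if t < i then u t
     else if t = i then j - 1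
     else max (j + ((t : ℤ) - (i : ℤ))) (u t))
  else 0

/-- The tuple `(u_1, …, u_n)`. -/
def utuple (u : ℕ → ℤ) (n : ℕ) : ℕ → ℤ := fun t =>
  if 1 ≤ t ∧ t ≤ n then u t else 0

/-- The lattice `𝓛` of tuples `c` with `u t ≤ c t ≤ v t` for `t ∈ [1,n]`, strictly
increasing entries, and (normalization) `c t = 0` outside `[1,n]`.  It carries the
componentwise (induced product) order. -/
def ladderL (n : ℕ) (u v : ℕ → ℤ) : Set (ℕ → ℤ) :=
  {c | (∀ t, 1 ≤ t → t ≤ n → u t ≤ c t ∧ c t ≤ v t) ∧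
       (∀ t, 1 ≤ t → t + 1 ≤ n → c t < c (t + 1)) ∧
       (∀ t, t = 0 ∨ n < t → c t = 0)}

/-- The set `P_𝓛 = { a_{i,j} : i ∈ [n], j ∈ [u_i + 1, v_i] }`. -/
def PL (n : ℕ) (u v : ℕ → ℤ) : Set (ℕ → ℤ) :=
  {x | ∃ i : ℕ, ∃ j : ℤ, 1 ≤ i ∧ i ≤ n ∧ u i + 1 ≤ j ∧ j ≤ v i ∧ x = atuple u n i j}

/-- The product poset `𝓛 × [r]`. -/
def ladderLr (n : ℕ) (u v : ℕ → ℤ) (r : ℤ) : Set ((ℕ → ℤ) × ℤ) :=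
  {p | p.1 ∈ ladderL n u v ∧ 1 ≤ p.2 ∧ p.2 ≤ r}

/-- The set `P_{𝓛×[r]} = { (a_{i,j}, 1) } ∪ { ((u_1,…,u_n), k) : k ∈ [2,r] }`. -/
def PLr (n : ℕ) (u v : ℕ → ℤ) (r : ℤ) : Set ((ℕ → ℤ) × ℤ) :=
  {p | (p.1 ∈ PL n u v ∧ p.2 = 1) ∨ (p.1 = utuple u n ∧ 2 ≤ p.2 ∧ p.2 ≤ r)}

/-- `ε_i > 1`, with the convention `ε_n > 1` (i.e. `i = n` or `u_{i+1} - u_i > 1`). -/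
def epsGt1 (u : ℕ → ℤ) (n i : ℕ) : Prop := i = n ∨ 1 < u (i + 1) - u i

/-- `θ_{i-1} > 1`, with the convention `θ_0 > 1` (i.e. `i = 1` or `v_i - v_{i-1} > 1`). -/
def thetaGt1 (v : ℕ → ℤ) (i : ℕ) : Prop := i = 1 ∨ 1 < v i - v (i - 1)

/-- Membership in `C = { i ∈ [n-1] : v_i < u_{i+1} } ∪ { n }`. -/
def inC (n : ℕ) (u v : ℕ → ℤ) (i : ℕ) : Prop :=
  (1 ≤ i ∧ i + 1 ≤ n ∧ v i < u (i + 1)) ∨ i = n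

/-- The set `C = { i ∈ [n-1] : v_i < u_{i+1} } ∪ { n }`. -/
def Cset (n : ℕ) (u v : ℕ → ℤ) : Set ℕ :=
  {i | 1 ≤ i ∧ i + 1 ≤ n ∧ v i < u (i + 1)} ∪ {n}

/-- `[p,q]` is one of the blocks `[p_s, q_s]` determined by `C`: `q ∈ C`,
no element of `C` lies in `[p, q-1]`, and either `p = 1` or `p - 1 ∈ C`. -/
def IsBlock (n : ℕ) (u v : ℕ → ℤ) (p q : ℕ) : Prop :=
  1 ≤ p ∧ p ≤ q ∧ q ≤ n ∧ inC n u v q ∧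
    (∀ j, p ≤ j → j < q → ¬ inC n u v j) ∧ (p = 1 ∨ inC n u v (p - 1))

/-- `i0 = min { i ∈ [p,q] : ε_i > 1 }` (with the convention `ε_n > 1`). -/
def IsBlockMin (n : ℕ) (u : ℕ → ℤ) (p q i0 : ℕ) : Prop :=
  p ≤ i0 ∧ i0 ≤ q ∧ epsGt1 u n i0 ∧ ∀ j, p ≤ j → j < i0 → ¬ epsGt1 u n j

/-- The comparability graph of a poset: two distinct elements are adjacent
iff they are comparable. -/
def compGraph (α : Type*) [Preorder α] : SimpleGraph α where
  Adj x y := x ≠ y ∧ (x ≤ y ∨ y ≤ x)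
  symm := ⟨fun x y h => ⟨Ne.symm h.1, Or.symm h.2⟩⟩
  loopless := ⟨fun x h => h.1 rfl⟩

/-- A poset is pure if all of its maximal chains have the same cardinality
(equivalently, the same length). -/
def IsPure (α : Type*) [Preorder α] : Prop :=
  ∀ A B : Set α, IsMaxChain (· ≤ ·) A → IsMaxChain (· ≤ ·) B → A.ncard = B.ncard


section Basic

variable {n : ℕ} {u v : ℕ → ℤ}

lemma gap_mono {w : ℕ → ℤ} (hmono : ∀ i, 1 ≤ i → i + 1 ≤ n → w i < w (i + 1))
    {a b : ℕ} (ha : 1 ≤ a) (hab : a ≤ b) (hbn : b ≤ n) : (b : ℤ) - a ≤ w b - w a := by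
  induction b with
  | zero => omega
  | succ b ih =>
    rcases Nat.lt_or_ge a (b + 1) with h | h
    · have h1 := ih (by omega) (by omega)
      have h2 := hmono b (by omega) (by omega)
      push_cast at h1 ⊢
      omega
    · have : a = b + 1 := by omega
      subst this
      simp

lemma atuple_apply {i t : ℕ} {j : ℤ} (h1 : 1 ≤ t) (h2 : t ≤ n) :
    atuple u n i j t = if t < i then u t else max (j + ((t : ℤ) - (i : ℤ))) (u t) := by
  simp [atuple, h1, h2]

lemma atuple_apply_self {i : ℕ} {j : ℤ} (h1 : 1 ≤ i) (h2 : i ≤ n) (hj : u i < j) :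
    atuple u n i j i = j := by
  rw [atuple_apply h1 h2, if_neg (lt_irrefl i), sub_self, add_zero]
  exact max_eq_left (le_of_lt hj)

lemma utuple_apply {t : ℕ} (h1 : 1 ≤ t) (h2 : t ≤ n) : utuple u n t = u t := by
  simp [utuple, h1, h2]

lemma atuple_le_atuple_iff {i k : ℕ} {j l : ℤ} (hi1 : 1 ≤ i) (hin : i ≤ n)
    (hk1 : 1 ≤ k) (hkn : k ≤ n) (hj : u i < j) :
    atuple u n i j ≤ atuple u n k l ↔ (k ≤ i ∧ j + (k : ℤ) ≤ l + (i : ℤ)) := by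
  constructor
  · intro h
    have hki : k ≤ i := by
      by_contra hik
      have h2 := h i
      rw [atuple_apply hi1 hin, atuple_apply hi1 hin, if_neg (lt_irrefl i),
        if_pos (by omega : i < k)] at h2
      have : j ≤ u i := le_trans (by simp : j ≤ max (j + ((i:ℤ) - i)) (u i)) h2
      omega
    refine ⟨hki, ?_⟩
    have h2 := h i
    rw [atuple_apply hi1 hin, atuple_apply hi1 hin, if_neg (lt_irrefl i),
      if_neg (by omega : ¬ i < k)] at h2
    have h3 : j ≤ max (l + ((i:ℤ) - k)) (u i) := le_trans (by simp) h2
    rcases le_max_iff.mp h3 with h4 | h4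
    · omega
    · omega
  · rintro ⟨hki, hjl⟩
    intro t
    by_cases ht : 1 ≤ t ∧ t ≤ n
    · rw [atuple_apply ht.1 ht.2, atuple_apply ht.1 ht.2]
      by_cases hti : t < i
      · rw [if_pos hti]
        by_cases htk : t < k
        · rw [if_pos htk]
        · rw [if_neg htk]
          exact le_max_right _ _
      · rw [if_neg hti, if_neg (by omega : ¬ t < k)]
        have hcast : (k : ℤ) ≤ i := by exact_mod_cast hki
        have harg : j + ((t : ℤ) - i) ≤ l + ((t : ℤ) - k) := by omega
        exact max_le_max harg (le_refl _)
    · simp only [atuple, if_neg ht, le_refl]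

lemma not_atuple_le_utuple {i : ℕ} {j : ℤ} (hi1 : 1 ≤ i) (hin : i ≤ n) (hj : u i < j) :
    ¬ atuple u n i j ≤ utuple u n := by
  intro h
  have h2 := h i
  rw [atuple_apply_self hi1 hin hj, utuple_apply hi1 hin] at h2
  exact absurd h2 (not_le.mpr hj)

lemma atuple_ne_utuple {i : ℕ} {j : ℤ} (hi1 : 1 ≤ i) (hin : i ≤ n) (hj : u i < j) :
    atuple u n i j ≠ utuple u n := fun h => not_atuple_le_utuple hi1 hin hj h.le

lemma atuple_inj {i k : ℕ} {j l : ℤ} (hi1 : 1 ≤ i) (hin : i ≤ n)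
    (hk1 : 1 ≤ k) (hkn : k ≤ n) (hj : u i < j) (hl : u k < l)
    (h : atuple u n i j = atuple u n k l) : i = k ∧ j = l := by
  have h1 := (atuple_le_atuple_iff hi1 hin hk1 hkn hj).mp h.le
  have h2 := (atuple_le_atuple_iff hk1 hkn hi1 hin hl).mp h.ge
  omega

end Basic



variable {α : Type*} [PartialOrder α] [Finite α]

/-- A maximal chain in a finite nonempty partial order has a least and a greatest element,
which are minimal resp. maximal in the whole order, and if the order has a rank function,
the cardinality is the rank difference plus one. -/
lemma maxChain_exists_bounds {A : Set α} (hA : IsMaxChain (· ≤ ·) A) [Nonempty α] :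
    ∃ x ∈ A, ∃ y ∈ A, IsMin x ∧ IsMax y ∧ (∀ a ∈ A, x ≤ a ∧ a ≤ y) := by
  have hfin : A.Finite := A.toFinite
  have hne : A.Nonempty := by
    by_contra h
    rw [Set.not_nonempty_iff_eq_empty] at h
    obtain ⟨z⟩ := ‹Nonempty α›
    have : IsChain (· ≤ ·) ({z} : Set α) := Set.Subsingleton.isChain (Set.subsingleton_singleton)
    have h2 := hA.2 this (by rw [h]; exact Set.empty_subset _)
    rw [h] at h2
    exact Set.singleton_ne_empty z h2.symm
  obtain ⟨y, hyA, hy⟩ := Set.Finite.exists_maximalFor id A hfin hne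
  obtain ⟨x, hxA, hx⟩ := Set.Finite.exists_minimalFor id A hfin hne
  have hyg : ∀ a ∈ A, a ≤ y := by
    intro a ha
    rcases eq_or_ne a y with rfl | hne'
    · exact le_refl _
    · rcases hA.1 ha hyA hne' with h | h
      · exact h
      · exact hy ha h
  have hxl : ∀ a ∈ A, x ≤ a := by
    intro a ha
    rcases eq_or_ne a x with rfl | hne'
    · exact le_refl _
    · rcases hA.1 ha hxA hne' with h | h
      · exact hx ha h
      · exact h
  refine ⟨x, hxA, y, hyA, ?_, ?_, fun a ha => ⟨hxl a ha, hyg a ha⟩⟩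
  · -- x is minimal
    intro b hb
    by_contra hxb
    have hbx : b < x := lt_of_le_of_ne hb (fun h => hxb (h ▸ le_refl _))
    have hbA : b ∉ A := fun h => absurd (hxl b h) (not_le_of_gt hbx)
    have hchain : IsChain (· ≤ ·) (insert b A) := by
      intro p hp q hq hpq
      rcases hp with rfl | hp <;> rcases hq with rfl | hq
      · exact absurd rfl hpq
      · exact Or.inl (hbx.le.trans (hxl q hq))
      · exact Or.inr (hbx.le.trans (hxl p hp))
      · exact hA.1 hp hq hpq
    have := hA.2 hchain (Set.subset_insert _ _)
    exact hbA (this ▸ Set.mem_insert b A)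
  · intro b hb
    by_contra hyb
    have hby : y < b := lt_of_le_of_ne hb (fun h => hyb (h ▸ le_refl _))
    have hbA : b ∉ A := fun h => absurd (hyg b h) (not_le_of_gt hby)
    have hchain : IsChain (· ≤ ·) (insert b A) := by
      intro p hp q hq hpq
      rcases hp with rfl | hp <;> rcases hq with rfl | hq
      · exact absurd rfl hpq
      · exact Or.inr ((hyg q hq).trans hby.le)
      · exact Or.inl ((hyg p hp).trans hby.le)
      · exact hA.1 hp hq hpq
    have := hA.2 hchain (Set.subset_insert _ _)
    exact hbA (this ▸ Set.mem_insert b A)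

lemma maxChain_ncard (ρ : α → ℤ) (hρ : ∀ x y : α, x ⋖ y → ρ y = ρ x + 1)
    {A : Set α} (hA : IsMaxChain (· ≤ ·) A) {x y : α} (hxA : x ∈ A) (hyA : y ∈ A)
    (hxl : ∀ a ∈ A, x ≤ a) (hyg : ∀ a ∈ A, a ≤ y) :
    (A.ncard : ℤ) = ρ y - ρ x + 1 := by
  have hfin : A.Finite := A.toFinite
  -- key claim by strong induction on the card
  have key : ∀ N : ℕ, ∀ a ∈ A, ({b ∈ A | b ≤ a}).ncard = N → (N : ℤ) = ρ a - ρ x + 1 := by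
    intro N
    induction N using Nat.strong_induction_on with
    | _ N ih =>
      intro a haA hcard
      rcases eq_or_ne a x with rfl | hax
      · have : {b ∈ A | b ≤ a} = {a} := by
          apply Set.eq_singleton_iff_unique_mem.2
          exact ⟨⟨haA, le_refl _⟩, fun b hb => le_antisymm hb.2 (hxl b hb.1)⟩
        rw [this, Set.ncard_singleton] at hcard
        omega
      · -- a ≠ x ; find predecessor
        have hSfin : ({b ∈ A | b ≤ a}).Finite := hfin.subset (Set.sep_subset _ _)
        have hxS : x ∈ {b ∈ A | b ≤ a} := ⟨hxA, hxl a haA⟩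
        have haS : a ∈ {b ∈ A | b ≤ a} := ⟨haA, le_refl _⟩
        have hS'ne : ({b ∈ A | b ≤ a} \ {a}).Nonempty := ⟨x, hxS, by simpa using fun h => hax h.symm⟩
        have hS'fin : ({b ∈ A | b ≤ a} \ {a}).Finite := hSfin.diff
        obtain ⟨a', ha'mem, ha'max⟩ := Set.Finite.exists_maximalFor id _ hS'fin hS'ne
        obtain ⟨⟨ha'A, ha'le⟩, ha'ne⟩ := ha'mem
        have ha'ne' : a' ≠ a := by simpa using ha'ne
        have ha'lt : a' < a := lt_of_le_of_ne ha'le ha'ne'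
        have ha'g : ∀ b ∈ A, b ≤ a → b ≠ a → b ≤ a' := by
          intro b hbA hba hbne
          rcases eq_or_ne b a' with rfl | hba'
          · exact le_refl _
          · rcases hA.1 hbA ha'A hba' with h | h
            · exact h
            · exact ha'max ⟨⟨hbA, hba⟩, by simpa using hbne⟩ h
        -- a' ⋖ a
        have hcov : a' ⋖ a := by
          refine ⟨ha'lt, fun z hz1 hz2 => ?_⟩
          have hzA : z ∉ A := by
            intro hzA
            have := ha'g z hzA hz2.le (ne_of_lt hz2)
            exact absurd hz1 (not_lt_of_ge this)
          have hchain : IsChain (· ≤ ·) (insert z A) := by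
            intro p hp q hq hpq
            rcases hp with rfl | hp <;> rcases hq with rfl | hq
            · exact absurd rfl hpq
            · -- p = z, q ∈ A
              rcases eq_or_ne q a with rfl | hqa
              · exact Or.inl hz2.le
              · rcases hA.1 hq haA hqa with h | h
                · exact Or.inr ((ha'g q hq h hqa).trans hz1.le)
                · exact Or.inl (hz2.le.trans h)
            · rcases eq_or_ne p a with rfl | hpa
              · exact Or.inr hz2.le
              · rcases hA.1 hp haA hpa with h | h
                · exact Or.inl ((ha'g p hp h hpa).trans hz1.le)
                · exact Or.inr (hz2.le.trans h)
            · exact hA.1 hp hq hpq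
          have := hA.2 hchain (Set.subset_insert _ _)
          exact hzA (this ▸ Set.mem_insert z A)
        have hset : {b ∈ A | b ≤ a'} = {b ∈ A | b ≤ a} \ {a} := by
          ext b
          constructor
          · rintro ⟨hbA, hba'⟩
            exact ⟨⟨hbA, hba'.trans ha'le⟩, by
              simp only [Set.mem_singleton_iff]
              rintro rfl
              exact absurd hba' (not_le_of_gt ha'lt)⟩
          · rintro ⟨⟨hbA, hba⟩, hbne⟩
            exact ⟨hbA, ha'g b hbA hba (by simpa using hbne)⟩
        have hNpos : 0 < N := by
          rw [← hcard]
          exact (Set.ncard_pos hSfin).2 ⟨a, haS⟩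
        have hcard' : ({b ∈ A | b ≤ a'}).ncard = N - 1 := by
          rw [hset, Set.ncard_diff_singleton_of_mem haS, hcard]
        have := ih (N - 1) (by omega) a' ha'A hcard'
        have hra := hρ a' a hcov
        push_cast [Nat.cast_sub (by omega : 1 ≤ N)] at this ⊢
        omega
  have hAeq : {b ∈ A | b ≤ y} = A := by
    ext b; exact ⟨fun h => h.1, fun h => ⟨h, hyg b h⟩⟩
  have := key A.ncard y hyA (by rw [hAeq])
  omega

lemma exists_maxChain_pair {x y : α} (hxy : x ≤ y) :
    ∃ A : Set α, IsMaxChain (· ≤ ·) A ∧ x ∈ A ∧ y ∈ A := by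
  have hchain : IsChain (· ≤ ·) ({x, y} : Set α) := by
    intro p hp q hq hpq
    rcases hp with rfl | hp <;> rcases hq with rfl | hq
    · exact absurd rfl hpq
    · simp_all
    · simp_all
    · simp_all
  obtain ⟨M, hM, hsub⟩ := hchain.exists_maxChain
  exact ⟨M, hM, hsub (by simp), hsub (by simp)⟩

/-- Purity criterion via a rank function. -/
lemma isPure_iff_rank [Nonempty α] (ρ : α → ℤ) (hρ : ∀ x y : α, x ⋖ y → ρ y = ρ x + 1) :
    IsPure α ↔ ∀ x y x' y' : α, IsMin x → IsMax y → x ≤ y → IsMin x' → IsMax y' → x' ≤ y' →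
      ρ y - ρ x = ρ y' - ρ x' := by
  constructor
  · intro hpure x y x' y' hminx hmaxy hxy hminx' hmaxy' hxy'
    obtain ⟨A, hA, hxA, hyA⟩ := exists_maxChain_pair hxy
    obtain ⟨B, hB, hxB, hyB⟩ := exists_maxChain_pair hxy'
    obtain ⟨x0, hx0A, y0, hy0A, hminx0, hmaxy0, hbA⟩ := maxChain_exists_bounds hA
    obtain ⟨x0', hx0B, y0', hy0B, hminx0', hmaxy0', hbB⟩ := maxChain_exists_bounds hB
    have hx0 : x0 = x := le_antisymm (hbA x hxA).1 (hminx (hbA x hxA).1)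
    have hy0 : y0 = y := le_antisymm (hmaxy (hbA y hyA).2) (hbA y hyA).2
    have hx0' : x0' = x' := le_antisymm (hbB x' hxB).1 (hminx' (hbB x' hxB).1)
    have hy0' : y0' = y' := le_antisymm (hmaxy' (hbB y' hyB).2) (hbB y' hyB).2
    subst hx0 hy0 hx0' hy0'
    have h1 := maxChain_ncard ρ hρ hA hx0A hy0A (fun a ha => (hbA a ha).1)
      (fun a ha => (hbA a ha).2)
    have h2 := maxChain_ncard ρ hρ hB hx0B hy0B (fun a ha => (hbB a ha).1)
      (fun a ha => (hbB a ha).2)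
    have := hpure A B hA hB
    omega
  · intro h A B hA hB
    obtain ⟨x, hxA, y, hyA, hminx, hmaxy, hbA⟩ := maxChain_exists_bounds hA
    obtain ⟨x', hxB, y', hyB, hminx', hmaxy', hbB⟩ := maxChain_exists_bounds hB
    have h1 := maxChain_ncard ρ hρ hA hxA hyA (fun a ha => (hbA a ha).1)
      (fun a ha => (hbA a ha).2)
    have h2 := maxChain_ncard ρ hρ hB hxB hyB (fun a ha => (hbB a ha).1)
      (fun a ha => (hbB a ha).2)
    have := h x y x' y' hminx hmaxy (hbA y hyA).1 hminx' hmaxy' (hbB y' hyB).1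
    omega


section Rho

variable {n : ℕ} {u v : ℕ → ℤ} {r : ℤ}

lemma le_apply {f g : ℕ → ℤ} (h : f ≤ g) (t : ℕ) : f t ≤ g t := h t

lemma mem_PLr_elim {x : (ℕ → ℤ) × ℤ} (hx : x ∈ PLr n u v r) :
    (∃ i : ℕ, ∃ j : ℤ, 1 ≤ i ∧ i ≤ n ∧ u i + 1 ≤ j ∧ j ≤ v i ∧ x = (atuple u n i j, 1)) ∨
    (∃ c : ℤ, 2 ≤ c ∧ c ≤ r ∧ x = (utuple u n, c)) := by
  rcases hx with ⟨⟨i, j, h1, h2, h3, h4, h5⟩, h6⟩ | ⟨h1, h2, h3⟩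
  · exact Or.inl ⟨i, j, h1, h2, h3, h4, by rw [← h5, ← h6]⟩
  · exact Or.inr ⟨x.2, h2, h3, by rw [← h1]⟩

lemma atuple_mem_PLr {i : ℕ} {j : ℤ} (h1 : 1 ≤ i) (h2 : i ≤ n) (h3 : u i + 1 ≤ j)
    (h4 : j ≤ v i) : ((atuple u n i j, 1) : (ℕ → ℤ) × ℤ) ∈ PLr n u v r :=
  Or.inl ⟨⟨i, j, h1, h2, h3, h4, rfl⟩, rfl⟩

lemma utuple_mem_PLr {c : ℤ} (h1 : 2 ≤ c) (h2 : c ≤ r) :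
    ((utuple u n, c) : (ℕ → ℤ) × ℤ) ∈ PLr n u v r :=
  Or.inr ⟨rfl, h1, h2⟩

open Classical in
/-- Rank function. -/
noncomputable def rho (n : ℕ) (u : ℕ → ℤ) (x : (ℕ → ℤ) × ℤ) : ℤ :=
  if h : ∃ p : ℕ × ℤ, (1 ≤ p.1 ∧ p.1 ≤ n ∧ u p.1 < p.2) ∧ x.1 = atuple u n p.1 p.2
  then h.choose.2 - 2 * (h.choose.1 : ℤ) else x.2

lemma rho_atuple {i : ℕ} {j c : ℤ} (h1 : 1 ≤ i) (h2 : i ≤ n) (h3 : u i < j) :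
    rho n u (atuple u n i j, c) = j - 2 * (i : ℤ) := by
  have hex : ∃ p : ℕ × ℤ, (1 ≤ p.1 ∧ p.1 ≤ n ∧ u p.1 < p.2) ∧
      (atuple u n i j, c).1 = atuple u n p.1 p.2 := ⟨(i, j), ⟨h1, h2, h3⟩, rfl⟩
  rw [rho]
  rw [dif_pos hex]
  obtain ⟨⟨g1, g2, g3⟩, geq⟩ := hex.choose_spec
  obtain ⟨e1, e2⟩ := atuple_inj h1 h2 g1 g2 h3 g3 geq
  rw [← e1, ← e2]

lemma rho_utuple {c : ℤ} : rho n u (utuple u n, c) = c := by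
  rw [rho]
  rw [dif_neg]
  rintro ⟨p, ⟨g1, g2, g3⟩, geq⟩
  exact atuple_ne_utuple g1 g2 g3 geq.symm

lemma atuple_pair_ne {n : ℕ} {u : ℕ → ℤ} {i k : ℕ} {j l : ℤ} (hi1 : 1 ≤ i) (hin : i ≤ n)
    (hk1 : 1 ≤ k) (hkn : k ≤ n) (hj : u i < j) (hl : u k < l) (hne : ¬ (i = k ∧ j = l)) :
    ((atuple u n i j, (1:ℤ)) : (ℕ → ℤ) × ℤ) ≠ (atuple u n k l, 1) := fun h =>
  hne (atuple_inj hi1 hin hk1 hkn hj hl (congrArg Prod.fst h))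

lemma subtype_lt_mk {S : Set ((ℕ → ℤ) × ℤ)} {a b : (ℕ → ℤ) × ℤ} (ha : a ∈ S) (hb : b ∈ S)
    (hab : a ≤ b) (hne : a ≠ b) : (⟨a, ha⟩ : ↥S) < ⟨b, hb⟩ :=
  lt_of_le_of_ne hab (fun h => hne (by simpa using h))

lemma prod_mk_le_iff_fst {a b : ℕ → ℤ} {s t : ℤ} :
    ((a, s) : (ℕ → ℤ) × ℤ) ≤ (b, t) ↔ a ≤ b ∧ s ≤ t := Prod.mk_le_mk

/-- Every cover in `PLr` raises `rho` by exactly 1. -/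
lemma rho_cover (humono : ∀ i, 1 ≤ i → i + 1 ≤ n → u i < u (i + 1))
    (hvmono : ∀ i, 1 ≤ i → i + 1 ≤ n → v i < v (i + 1))
    (x y : ↥(PLr n u v r)) (hc : x ⋖ y) : rho n u y.val = rho n u x.val + 1 := by
  have hle : x.val ≤ y.val := hc.1.le
  have hne : x.val ≠ y.val := fun h => hc.1.ne (Subtype.ext h)
  rcases mem_PLr_elim x.2 with ⟨i, j, hi1, hin, hj1, hj2, hxval⟩ | ⟨s, hs1, hs2, hxval⟩ <;>
    rcases mem_PLr_elim y.2 with ⟨k, l, hk1, hkn, hl1, hl2, hyval⟩ | ⟨c, hc1, hc2, hyval⟩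
  · -- both atuple
    rw [hxval, hyval] at hle hne
    obtain ⟨hle1, -⟩ := prod_mk_le_iff_fst.mp hle
    obtain ⟨hki, hjl⟩ := (atuple_le_atuple_iff hi1 hin hk1 hkn (by omega)).mp hle1
    have hnep : ¬ (i = k ∧ j = l) := by
      rintro ⟨rfl, rfl⟩; exact hne rfl
    -- exclude rank gap ≥ 2
    by_cases hgap : l + (i : ℤ) - j - k + ((i : ℤ) - k) ≥ 2
    · exfalso
      rcases eq_or_ne i k with rfl | hik
      · -- same column, bump j
        have hz : ((atuple u n i (j+1), 1) : (ℕ → ℤ) × ℤ) ∈ PLr n u v r :=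
          atuple_mem_PLr hi1 hin (by omega) (by omega)
        have hxz : x < (⟨_, hz⟩ : ↥(PLr n u v r)) := by
          rw [← Subtype.coe_lt_coe]
          show x.val < (atuple u n i (j+1), 1)
          rw [hxval]
          exact lt_of_le_of_ne
            (prod_mk_le_iff_fst.mpr ⟨(atuple_le_atuple_iff hi1 hin hi1 hin (by omega)).mpr
              ⟨le_refl _, by omega⟩, le_refl _⟩)
            (atuple_pair_ne hi1 hin hi1 hin (by omega) (by omega) (by omega))
        have hzy : (⟨_, hz⟩ : ↥(PLr n u v r)) < y := by
          rw [← Subtype.coe_lt_coe]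
          show ((atuple u n i (j+1), 1) : (ℕ → ℤ) × ℤ) < y.val
          rw [hyval]
          exact lt_of_le_of_ne
            (prod_mk_le_iff_fst.mpr ⟨(atuple_le_atuple_iff hi1 hin hi1 hin (by omega)).mpr
              ⟨le_refl _, by omega⟩, le_refl _⟩)
            (atuple_pair_ne hi1 hin hi1 hin (by omega) (by omega) (by omega))
        exact hc.2 hxz hzy
      · -- k < i, move left
        have hklt : k < i := by omega
        have hii : i - 1 + 1 = i := by omega
        have hu' : u (i-1) < u i := by
          have := humono (i-1) (by omega) (by omega)
          rwa [hii] at this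
        have hvgap : ((i:ℤ) - 1) - k ≤ v (i-1) - v k := by
          have := gap_mono (n := n) hvmono (a := k) (b := i - 1) hk1 (by omega) (by omega)
          have hcast : ((i - 1 : ℕ) : ℤ) = (i : ℤ) - 1 := by omega
          rwa [hcast] at this
        have hz : ((atuple u n (i-1) (j-1), 1) : (ℕ → ℤ) × ℤ) ∈ PLr n u v r :=
          atuple_mem_PLr (by omega) (by omega) (by omega) (by omega)
        have hcast : ((i - 1 : ℕ) : ℤ) = (i : ℤ) - 1 := by omega
        have hxz : x < (⟨_, hz⟩ : ↥(PLr n u v r)) := by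
          rw [← Subtype.coe_lt_coe]
          show x.val < (atuple u n (i-1) (j-1), 1)
          rw [hxval]
          exact lt_of_le_of_ne
            (prod_mk_le_iff_fst.mpr ⟨(atuple_le_atuple_iff hi1 hin (by omega) (by omega)
              (by omega)).mpr ⟨by omega, by omega⟩, le_refl _⟩)
            (atuple_pair_ne hi1 hin (by omega) (by omega) (by omega) (by omega) (by omega))
        have hzy : (⟨_, hz⟩ : ↥(PLr n u v r)) < y := by
          rw [← Subtype.coe_lt_coe]
          show ((atuple u n (i-1) (j-1), 1) : (ℕ → ℤ) × ℤ) < y.val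
          rw [hyval]
          exact lt_of_le_of_ne
            (prod_mk_le_iff_fst.mpr ⟨(atuple_le_atuple_iff (by omega) (by omega) hk1 hkn
              (by omega)).mpr ⟨by omega, by omega⟩, le_refl _⟩)
            (atuple_pair_ne (by omega) (by omega) hk1 hkn (by omega) (by omega) (by omega))
        exact hc.2 hxz hzy
    · -- rank gap is exactly 1
      have h1 : rho n u y.val = l - 2 * (k : ℤ) := by rw [hyval]; exact rho_atuple hk1 hkn (by omega)
      have h2 : rho n u x.val = j - 2 * (i : ℤ) := by rw [hxval]; exact rho_atuple hi1 hin (by omega)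
      have : ¬ ((i : ℤ) = k ∧ j = l) := by
        intro ⟨e1, e2⟩; exact hnep ⟨by exact_mod_cast e1, e2⟩
      omega
  · -- x atuple, y utuple : impossible
    rw [hxval, hyval] at hle
    obtain ⟨hle1, -⟩ := prod_mk_le_iff_fst.mp hle
    exact absurd hle1 (not_atuple_le_utuple hi1 hin (by omega))
  · -- x utuple, y atuple : impossible
    rw [hxval, hyval] at hle
    obtain ⟨-, hle2⟩ := prod_mk_le_iff_fst.mp hle
    omega
  · -- both utuple
    rw [hxval, hyval] at hle hne
    obtain ⟨-, hle2⟩ := prod_mk_le_iff_fst.mp hle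
    have hsc : s ≠ c := fun h => hne (by rw [h])
    have hstep : c = s + 1 := by
      by_contra hst
      have hz : ((utuple u n, s + 1) : (ℕ → ℤ) × ℤ) ∈ PLr n u v r :=
        utuple_mem_PLr (by omega) (by omega)
      have hxz : x < (⟨_, hz⟩ : ↥(PLr n u v r)) := by
        rw [show x = ⟨_, hxval ▸ x.2⟩ from Subtype.ext hxval]
        exact subtype_lt_mk _ _ (prod_mk_le_iff_fst.mpr ⟨le_refl _, by omega⟩)
          (fun h => by rw [Prod.mk.injEq] at h; exact absurd h.2 (by omega))
      have hzy : (⟨_, hz⟩ : ↥(PLr n u v r)) < y := by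
        rw [show y = ⟨_, hyval ▸ y.2⟩ from Subtype.ext hyval]
        exact subtype_lt_mk _ _ (prod_mk_le_iff_fst.mpr ⟨le_refl _, by omega⟩)
          (fun h => by rw [Prod.mk.injEq] at h; exact absurd h.2 (by omega))
      exact hc.2 hxz hzy
    rw [hxval, hyval, rho_utuple, rho_utuple]
    omega

end Rho

section MinMax

variable {n : ℕ} {u v : ℕ → ℤ} {r : ℤ}

lemma subtype_le_val {S : Set ((ℕ → ℤ) × ℤ)} {a b : ↥S} : a ≤ b ↔ a.val ≤ b.val :=
  Iff.rfl

lemma isMin_iff_atuple (humono : ∀ i, 1 ≤ i → i + 1 ≤ n → u i < u (i + 1))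
    (huv : ∀ i, 1 ≤ i → i ≤ n → u i < v i)
    {x : ↥(PLr n u v r)} {k : ℕ} {j : ℤ} (hk1 : 1 ≤ k) (hkn : k ≤ n)
    (hj1 : u k + 1 ≤ j) (hj2 : j ≤ v k) (hxval : x.val = (atuple u n k j, 1)) :
    IsMin x ↔ (j = u k + 1 ∧ epsGt1 u n k) := by
  constructor
  · intro hmin
    have hjval : j = u k + 1 := by
      by_contra hjc
      have hz : ((atuple u n k (j-1), 1) : (ℕ → ℤ) × ℤ) ∈ PLr n u v r :=
        atuple_mem_PLr hk1 hkn (by omega) (by omega)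
      have hzx : (⟨_, hz⟩ : ↥(PLr n u v r)) ≤ x := by
        rw [subtype_le_val, hxval]
        exact prod_mk_le_iff_fst.mpr ⟨(atuple_le_atuple_iff hk1 hkn hk1 hkn (by omega)).mpr
          ⟨le_refl _, by omega⟩, le_refl _⟩
      have := hmin hzx
      rw [subtype_le_val, hxval] at this
      obtain ⟨h1, -⟩ := prod_mk_le_iff_fst.mp this
      obtain ⟨-, h2⟩ := (atuple_le_atuple_iff hk1 hkn hk1 hkn (by omega)).mp h1
      omega
    refine ⟨hjval, ?_⟩
    by_contra hne
    rw [epsGt1] at hne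
    push_neg at hne
    obtain ⟨hkn', hstep⟩ := hne
    have hmono := humono k hk1 (by omega)
    have hz : ((atuple u n (k+1) (u k + 2), 1) : (ℕ → ℤ) × ℤ) ∈ PLr n u v r :=
      atuple_mem_PLr (by omega) (by omega) (by omega)
        (by have := huv (k+1) (by omega) (by omega); omega)
    have hzx : (⟨_, hz⟩ : ↥(PLr n u v r)) ≤ x := by
      rw [subtype_le_val, hxval]
      exact prod_mk_le_iff_fst.mpr ⟨(atuple_le_atuple_iff (by omega) (by omega) hk1 hkn
        (by omega)).mpr ⟨by omega, by push_cast; omega⟩, le_refl _⟩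
    have := hmin hzx
    rw [subtype_le_val, hxval] at this
    obtain ⟨h1, -⟩ := prod_mk_le_iff_fst.mp this
    obtain ⟨h2, -⟩ := (atuple_le_atuple_iff hk1 hkn (by omega) (by omega) (by omega)).mp h1
    omega
  · rintro ⟨rfl, heps⟩
    intro b hb
    rcases mem_PLr_elim b.2 with ⟨i', j', hi1', hin', hj1', hj2', hbval⟩ | ⟨c, hc1, hc2, hbval⟩
    · rw [subtype_le_val, hxval, hbval] at hb
      obtain ⟨h1, -⟩ := prod_mk_le_iff_fst.mp hb
      obtain ⟨h2, h3⟩ := (atuple_le_atuple_iff hi1' hin' hk1 hkn (by omega)).mp h1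
      have hik : i' = k := by
        by_contra hik
        have hgap := gap_mono (n := n) humono (a := k+1) (b := i') (by omega) (by omega) hin'
        rcases heps with rfl | heps
        · omega
        · push_cast at hgap; omega
      subst hik
      have : j' = u i' + 1 := by omega
      subst this
      rw [subtype_le_val, hxval, hbval]
    · rw [subtype_le_val, hxval, hbval] at hb
      obtain ⟨-, h2⟩ := prod_mk_le_iff_fst.mp hb
      omega

lemma isMax_iff_atuple (hvmono : ∀ i, 1 ≤ i → i + 1 ≤ n → v i < v (i + 1))
    (huv : ∀ i, 1 ≤ i → i ≤ n → u i < v i)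
    {x : ↥(PLr n u v r)} {i : ℕ} {l : ℤ} (hi1 : 1 ≤ i) (hin : i ≤ n)
    (hl1 : u i + 1 ≤ l) (hl2 : l ≤ v i) (hxval : x.val = (atuple u n i l, 1)) :
    IsMax x ↔ (l = v i ∧ thetaGt1 v i) := by
  constructor
  · intro hmax
    have hlval : l = v i := by
      by_contra hlc
      have hz : ((atuple u n i (l+1), 1) : (ℕ → ℤ) × ℤ) ∈ PLr n u v r :=
        atuple_mem_PLr hi1 hin (by omega) (by omega)
      have hxz : x ≤ (⟨_, hz⟩ : ↥(PLr n u v r)) := by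
        rw [subtype_le_val, hxval]
        exact prod_mk_le_iff_fst.mpr ⟨(atuple_le_atuple_iff hi1 hin hi1 hin (by omega)).mpr
          ⟨le_refl _, by omega⟩, le_refl _⟩
      have := hmax hxz
      rw [subtype_le_val, hxval] at this
      obtain ⟨h1, -⟩ := prod_mk_le_iff_fst.mp this
      obtain ⟨-, h2⟩ := (atuple_le_atuple_iff hi1 hin hi1 hin (by omega)).mp h1
      omega
    refine ⟨hlval, ?_⟩
    by_contra hne
    rw [thetaGt1] at hne
    push_neg at hne
    obtain ⟨hi1', hstep⟩ := hne
    have hii : i - 1 + 1 = i := by omega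
    have hmono := hvmono (i-1) (by omega) (by omega)
    rw [hii] at hmono
    have huv' := huv (i-1) (by omega) (by omega)
    have hz : ((atuple u n (i-1) (v i - 1), 1) : (ℕ → ℤ) × ℤ) ∈ PLr n u v r :=
      atuple_mem_PLr (by omega) (by omega) (by omega) (by omega)
    have hxz : x ≤ (⟨_, hz⟩ : ↥(PLr n u v r)) := by
      rw [subtype_le_val, hxval]
      exact prod_mk_le_iff_fst.mpr ⟨(atuple_le_atuple_iff hi1 hin (by omega) (by omega)
        (by omega)).mpr ⟨by omega, by omega⟩, le_refl _⟩
    have := hmax hxz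
    rw [subtype_le_val, hxval] at this
    obtain ⟨h1, -⟩ := prod_mk_le_iff_fst.mp this
    obtain ⟨h2, -⟩ := (atuple_le_atuple_iff (by omega) (by omega) hi1 hin (by omega)).mp h1
    omega
  · rintro ⟨rfl, htheta⟩
    intro b hb
    rcases mem_PLr_elim b.2 with ⟨i', l', hi1', hin', hl1', hl2', hbval⟩ | ⟨c, hc1, hc2, hbval⟩
    · rw [subtype_le_val, hxval, hbval] at hb
      obtain ⟨h1, -⟩ := prod_mk_le_iff_fst.mp hb
      obtain ⟨h2, h3⟩ := (atuple_le_atuple_iff hi1 hin hi1' hin' (by omega)).mp h1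
      have hik : i' = i := by
        by_contra hik
        have hgap := gap_mono (n := n) hvmono (a := i') (b := i - 1) hi1' (by omega) (by omega)
        rcases htheta with h1' | htheta
        · omega
        · push_cast at hgap; omega
      subst hik
      have : l' = v i' := by omega
      subst this
      rw [subtype_le_val, hxval, hbval]
    · rw [subtype_le_val, hxval, hbval] at hb
      obtain ⟨h1, -⟩ := prod_mk_le_iff_fst.mp hb
      exact absurd h1 (not_atuple_le_utuple hi1 hin (by omega))

lemma isMin_iff_utuple {x : ↥(PLr n u v r)} {s : ℤ} (hs1 : 2 ≤ s) (hs2 : s ≤ r)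
    (hxval : x.val = (utuple u n, s)) : IsMin x ↔ s = 2 := by
  constructor
  · intro hmin
    by_contra hsc
    have hz : ((utuple u n, s - 1) : (ℕ → ℤ) × ℤ) ∈ PLr n u v r :=
      utuple_mem_PLr (by omega) (by omega)
    have hzx : (⟨_, hz⟩ : ↥(PLr n u v r)) ≤ x := by
      rw [subtype_le_val, hxval]
      exact prod_mk_le_iff_fst.mpr ⟨le_refl _, by omega⟩
    have := hmin hzx
    rw [subtype_le_val, hxval] at this
    obtain ⟨-, h2⟩ := prod_mk_le_iff_fst.mp this
    omega
  · rintro rfl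
    intro b hb
    rcases mem_PLr_elim b.2 with ⟨i', j', hi1', hin', hj1', hj2', hbval⟩ | ⟨c, hc1, hc2, hbval⟩
    · rw [subtype_le_val, hxval, hbval] at hb
      obtain ⟨h1, -⟩ := prod_mk_le_iff_fst.mp hb
      exact absurd h1 (not_atuple_le_utuple hi1' hin' (by omega))
    · rw [subtype_le_val, hxval, hbval] at hb
      obtain ⟨-, h2⟩ := prod_mk_le_iff_fst.mp hb
      have : c = 2 := by omega
      subst this
      rw [subtype_le_val, hxval, hbval]
  
lemma isMax_iff_utuple {x : ↥(PLr n u v r)} {s : ℤ} (hs1 : 2 ≤ s) (hs2 : s ≤ r)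
    (humono : ∀ i, 1 ≤ i → i + 1 ≤ n → u i < u (i + 1))
    (hxval : x.val = (utuple u n, s)) : IsMax x ↔ s = r := by
  constructor
  · intro hmax
    by_contra hsc
    have hz : ((utuple u n, s + 1) : (ℕ → ℤ) × ℤ) ∈ PLr n u v r :=
      utuple_mem_PLr (by omega) (by omega)
    have hxz : x ≤ (⟨_, hz⟩ : ↥(PLr n u v r)) := by
      rw [subtype_le_val, hxval]
      exact prod_mk_le_iff_fst.mpr ⟨le_refl _, by omega⟩
    have := hmax hxz
    rw [subtype_le_val, hxval] at this
    obtain ⟨-, h2⟩ := prod_mk_le_iff_fst.mp this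
    omega
  · intro hsr
    intro b hb
    rcases mem_PLr_elim b.2 with ⟨i', j', hi1', hin', hj1', hj2', hbval⟩ | ⟨c, hc1, hc2, hbval⟩
    · rw [subtype_le_val, hxval, hbval] at hb
      obtain ⟨-, h2⟩ := prod_mk_le_iff_fst.mp hb
      omega
    · rw [subtype_le_val, hxval, hbval] at hb
      obtain ⟨-, h2⟩ := prod_mk_le_iff_fst.mp hb
      have : c = s := by omega
      subst this
      rw [subtype_le_val, hxval, hbval]

end MinMax

section Assemble

variable {n : ℕ} {u v : ℕ → ℤ} {r : ℤ}

lemma PLr_finite (humono : ∀ i, 1 ≤ i → i + 1 ≤ n → u i < u (i + 1))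
    (hvmono : ∀ i, 1 ≤ i → i + 1 ≤ n → v i < v (i + 1)) :
    (PLr n u v r).Finite := by
  apply Set.Finite.subset (Set.Finite.prod
    (Set.Finite.union
      (Set.Finite.image (fun p : ℕ × ℤ => atuple u n p.1 p.2)
        (Set.Finite.prod (Set.finite_Icc 1 n) (Set.finite_Icc (u 1 + 1) (v n))))
      (Set.finite_singleton (utuple u n)))
    (Set.Finite.union (Set.finite_singleton (1:ℤ)) (Set.finite_Icc (2 : ℤ) r)))
  intro x hx
  rcases mem_PLr_elim hx with ⟨i, j, hi1, hin, hj1, hj2, hxval⟩ | ⟨c, hc1, hc2, hxval⟩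
  · subst hxval
    have g1 := gap_mono (n := n) humono (a := 1) (b := i) le_rfl hi1 hin
    have g2 := gap_mono (n := n) hvmono (a := i) (b := n) hi1 hin le_rfl
    refine ⟨Or.inl ⟨(i, j), ⟨?_, ?_⟩, rfl⟩, ?_⟩
    · exact Set.mem_Icc.mpr ⟨hi1, hin⟩
    · exact Set.mem_Icc.mpr ⟨by push_cast at g1; omega, by push_cast at g2; omega⟩
    · exact Or.inl rfl
  · subst hxval
    exact ⟨Or.inr rfl, Or.inr (Set.mem_Icc.mpr ⟨by omega, by omega⟩)⟩

lemma isPure_iff_star (hn : 1 ≤ n)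
    (humono : ∀ i, 1 ≤ i → i + 1 ≤ n → u i < u (i + 1))
    (hvmono : ∀ i, 1 ≤ i → i + 1 ≤ n → v i < v (i + 1))
    (huv : ∀ i, 1 ≤ i → i ≤ n → u i < v i)
    (hr : 2 ≤ r) :
    IsPure ↥(PLr n u v r) ↔
      ∀ i k : ℕ, 1 ≤ i → i ≤ n → 1 ≤ k → k ≤ n → i ≤ k →
        thetaGt1 v i → epsGt1 u n k → u k + 1 + (i : ℤ) ≤ v i + (k : ℤ) →
        v i - 2 * (i : ℤ) - (u k + 1 - 2 * (k : ℤ)) = r - 2 := by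
  haveI : Finite ↥(PLr n u v r) := (PLr_finite humono hvmono).to_subtype
  haveI : Nonempty ↥(PLr n u v r) := ⟨⟨(utuple u n, 2), utuple_mem_PLr le_rfl hr⟩⟩
  rw [isPure_iff_rank (fun x => rho n u x.val) (rho_cover humono hvmono)]
  constructor
  · intro hpairs i k hi1 hin hk1 hkn hik htheta heps hcomp
    have hxmem : ((atuple u n k (u k + 1), 1) : (ℕ → ℤ) × ℤ) ∈ PLr n u v r :=
      atuple_mem_PLr hk1 hkn le_rfl (by have := huv k hk1 hkn; omega)
    have hymem : ((atuple u n i (v i), 1) : (ℕ → ℤ) × ℤ) ∈ PLr n u v r :=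
      atuple_mem_PLr hi1 hin (by have := huv i hi1 hin; omega) le_rfl
    have hx'mem : ((utuple u n, 2) : (ℕ → ℤ) × ℤ) ∈ PLr n u v r := utuple_mem_PLr le_rfl hr
    have hy'mem : ((utuple u n, r) : (ℕ → ℤ) × ℤ) ∈ PLr n u v r := utuple_mem_PLr hr le_rfl
    have hminx : IsMin (⟨_, hxmem⟩ : ↥(PLr n u v r)) :=
      (isMin_iff_atuple humono huv hk1 hkn le_rfl (by have := huv k hk1 hkn; omega) rfl).mpr
        ⟨rfl, heps⟩
    have hmaxy : IsMax (⟨_, hymem⟩ : ↥(PLr n u v r)) :=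
      (isMax_iff_atuple hvmono huv hi1 hin (by have := huv i hi1 hin; omega) le_rfl rfl).mpr
        ⟨rfl, htheta⟩
    have hminx' : IsMin (⟨_, hx'mem⟩ : ↥(PLr n u v r)) :=
      (isMin_iff_utuple le_rfl hr rfl).mpr rfl
    have hmaxy' : IsMax (⟨_, hy'mem⟩ : ↥(PLr n u v r)) :=
      (isMax_iff_utuple hr le_rfl humono rfl).mpr rfl
    have hxy : (⟨_, hxmem⟩ : ↥(PLr n u v r)) ≤ ⟨_, hymem⟩ := by
      rw [subtype_le_val]
      exact prod_mk_le_iff_fst.mpr ⟨(atuple_le_atuple_iff hk1 hkn hi1 hin (by omega)).mpr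
        ⟨hik, by omega⟩, le_refl _⟩
    have hx'y' : (⟨_, hx'mem⟩ : ↥(PLr n u v r)) ≤ ⟨_, hy'mem⟩ := by
      rw [subtype_le_val]
      exact prod_mk_le_iff_fst.mpr ⟨le_refl _, hr⟩
    have := hpairs _ _ _ _ hminx hmaxy hxy hminx' hmaxy' hx'y'
    simp only [rho_atuple hk1 hkn (by omega : u k < u k + 1),
      rho_atuple hi1 hin (by have := huv i hi1 hin; omega : u i < v i),
      rho_utuple] at this
    omega
  · intro hstar x y x' y' hminx hmaxy hxy hminx' hmaxy' hxy'
    have claim : ∀ a b : ↥(PLr n u v r), IsMin a → IsMax b → a ≤ b →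
        rho n u b.val - rho n u a.val = r - 2 := by
      intro a b hmin hmax hab
      rcases mem_PLr_elim a.2 with ⟨k, j, hk1, hkn, hj1, hj2, haval⟩ | ⟨s, hs1, hs2, haval⟩
      · obtain ⟨hjeq, heps⟩ := (isMin_iff_atuple humono huv hk1 hkn hj1 hj2 haval).mp hmin
        rcases mem_PLr_elim b.2 with ⟨i, l, hi1, hin, hl1, hl2, hbval⟩ | ⟨c, hc1, hc2, hbval⟩
        · obtain ⟨hleq, htheta⟩ := (isMax_iff_atuple hvmono huv hi1 hin hl1 hl2 hbval).mp hmax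
          have hord := hab
          rw [subtype_le_val, haval, hbval] at hord
          obtain ⟨h1, -⟩ := prod_mk_le_iff_fst.mp hord
          obtain ⟨h2, h3⟩ := (atuple_le_atuple_iff hk1 hkn hi1 hin (by omega)).mp h1
          have := hstar i k hi1 hin hk1 hkn h2 htheta heps (by omega)
          rw [haval, hbval, rho_atuple hk1 hkn (by omega), rho_atuple hi1 hin (by omega)]
          omega
        · exfalso
          have hord := hab
          rw [subtype_le_val, haval, hbval] at hord
          obtain ⟨h1, -⟩ := prod_mk_le_iff_fst.mp hord
          exact not_atuple_le_utuple hk1 hkn (by omega) h1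
      · have hseq := (isMin_iff_utuple hs1 hs2 haval).mp hmin
        rcases mem_PLr_elim b.2 with ⟨i, l, hi1, hin, hl1, hl2, hbval⟩ | ⟨c, hc1, hc2, hbval⟩
        · exfalso
          have hord := hab
          rw [subtype_le_val, haval, hbval] at hord
          obtain ⟨-, h2⟩ := prod_mk_le_iff_fst.mp hord
          omega
        · have hceq := (isMax_iff_utuple hc1 hc2 humono hbval).mp hmax
          rw [haval, hbval, rho_utuple, rho_utuple]
          omega
    rw [claim x y hminx hmaxy hxy, claim x' y' hminx' hmaxy' hxy']

end Assemble

section PartTwo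

variable {n : ℕ} {u v : ℕ → ℤ} {r : ℤ}

lemma eps_segment (humono : ∀ i, 1 ≤ i → i + 1 ≤ n → u i < u (i + 1))
    {a b : ℕ} (ha : 1 ≤ a) (hab : a ≤ b) (hbn : b ≤ n)
    (hno : ∀ j, a ≤ j → j < b → ¬ epsGt1 u n j) : u b - u a = (b : ℤ) - a := by
  induction b, hab using Nat.le_induction with
  | base => simp
  | succ b hab ih =>
    have hnob := hno b hab (by omega)
    rw [epsGt1] at hnob
    push_neg at hnob
    obtain ⟨hbne, hstep⟩ := hnob
    have hmono := humono b (by omega) (by omega)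
    have := ih (by omega) (fun j hj1 hj2 => hno j hj1 (by omega))
    push_cast
    omega

lemma theta_segment (hvmono : ∀ i, 1 ≤ i → i + 1 ≤ n → v i < v (i + 1))
    {a b : ℕ} (ha : 1 ≤ a) (hab : a ≤ b) (hbn : b ≤ n)
    (hno : ∀ j, a < j → j ≤ b → ¬ thetaGt1 v j) : v b - v a = (b : ℤ) - a := by
  induction b, hab using Nat.le_induction with
  | base => simp
  | succ b hab ih =>
    have hnob := hno (b + 1) (by omega) (by omega)
    rw [thetaGt1] at hnob
    push_neg at hnob
    obtain ⟨hbne, hstep⟩ := hnob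
    rw [show b + 1 - 1 = b from by omega] at hstep
    have hmono := hvmono b (by omega) (by omega)
    have := ih (by omega) (fun j hj1 hj2 => hno j hj1 (by omega))
    push_cast
    omega

lemma theta_of_block (huv : ∀ i, 1 ≤ i → i ≤ n → u i < v i) {p q : ℕ}
    (hb : IsBlock n u v p q) : thetaGt1 v p := by
  obtain ⟨hp1, hpq, hqn, -, -, hpC⟩ := hb
  rcases hpC with h1 | hC
  · exact Or.inl h1
  · rcases hC with ⟨hg1, hg2, hglt⟩ | hgn
    · right
      have huvp := huv p hp1 (by omega)
      rw [show p - 1 + 1 = p from by omega] at hglt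
      omega
    · omega
  
lemma eps_of_inC (huv : ∀ i, 1 ≤ i → i ≤ n → u i < v i) {q : ℕ} (hq1 : 1 ≤ q) (hqn : q ≤ n)
    (h : inC n u v q) : epsGt1 u n q := by
  rcases h with ⟨-, h2, h3⟩ | h
  · right
    have := huv q hq1 hqn
    omega
  · exact Or.inl h

lemma star_iff_blocks (hn : 1 ≤ n)
    (humono : ∀ i, 1 ≤ i → i + 1 ≤ n → u i < u (i + 1))
    (hvmono : ∀ i, 1 ≤ i → i + 1 ≤ n → v i < v (i + 1))
    (huv : ∀ i, 1 ≤ i → i ≤ n → u i < v i) :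
    (∀ i k : ℕ, 1 ≤ i → i ≤ n → 1 ≤ k → k ≤ n → i ≤ k →
        thetaGt1 v i → epsGt1 u n k → u k + 1 + (i : ℤ) ≤ v i + (k : ℤ) →
        v i - 2 * (i : ℤ) - (u k + 1 - 2 * (k : ℤ)) = r - 2) ↔
      (∀ p q, IsBlock n u v p q →
        ((∀ i k, p ≤ i → i ≤ k → k ≤ q → epsGt1 u n i → epsGt1 u n k →
            u k - u i = 2 * ((k : ℤ) - (i : ℤ))) ∧
         (∀ i k, p ≤ i → i ≤ k → k ≤ q → thetaGt1 v i → thetaGt1 v k →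
            v k - v i = 2 * ((k : ℤ) - (i : ℤ))) ∧
         (∀ i0, IsBlockMin n u p q i0 →
            r = (v p - u p) + (i0 : ℤ) - (p : ℤ) + 1))) := by
  classical
  constructor
  · -- star → blocks
    intro hstar p q hb
    obtain ⟨hp1, hpq, hqn, hqC, hnoC, hpC⟩ := hb
    have hthp : thetaGt1 v p := theta_of_block huv ⟨hp1, hpq, hqn, hqC, hnoC, hpC⟩
    have hepsq : epsGt1 u n q := eps_of_inC huv (by omega) hqn hqC
    have huvj : ∀ j, p ≤ j → j < q → u (j + 1) ≤ v j := by
      intro j hj1 hj2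
      have := hnoC j hj1 hj2
      rw [inC] at this
      push_neg at this
      exact this.1 (by omega) (by omega)
    have hex : ∃ i, p ≤ i ∧ epsGt1 u n i := ⟨q, hpq, hepsq⟩
    set i0 := Nat.find hex with hi0def
    obtain ⟨hi0p, hi0eps⟩ := Nat.find_spec hex
    have hwq : (fun i => p ≤ i ∧ epsGt1 u n i) q := ⟨hpq, hepsq⟩
    have hi0q : i0 ≤ q := Nat.find_le hwq
    have hi0min : ∀ j, p ≤ j → j < i0 → ¬ epsGt1 u n j := fun j hj1 hj2 h =>
      Nat.find_min hex hj2 ⟨hj1, h⟩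
    have hui0 : u i0 - u p = (i0 : ℤ) - p := eps_segment humono hp1 hi0p (by omega) hi0min
    have E0 := hstar p i0 hp1 (by omega) (by omega) (by omega) hi0p hthp hi0eps
      (by have := huv p hp1 (by omega); omega)
    have main : ∀ j, p ≤ j → j ≤ q →
        (∀ k, p ≤ k → k ≤ j → epsGt1 u n k →
          u k + 1 - 2 * (k : ℤ) = u i0 + 1 - 2 * (i0 : ℤ)) ∧
        (∀ i, p ≤ i → i ≤ j → thetaGt1 v i → v i - 2 * (i : ℤ) = v p - 2 * (p : ℤ)) := by
      intro j hpj
      induction j, hpj using Nat.le_induction with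
      | base =>
        intro _
        constructor
        · intro k hpk hkp heps
          have hkp' : k = p := by omega
          subst hkp'
          have : i0 ≤ k := Nat.find_le ⟨le_rfl, heps⟩
          have : i0 = k := by omega
          rw [this]
        · intro i hpi hip _
          have : i = p := by omega
          rw [this]
      | succ j hpj ih =>
        intro hjq
        obtain ⟨ihK, ihM⟩ := ih (by omega)
        -- the greatest theta-index ≤ j
        have hmwit : p ≤ j := hpj
        set m := Nat.findGreatest (fun i => p ≤ i ∧ thetaGt1 v i) j with hmdef
        have hmspec : p ≤ m ∧ thetaGt1 v m :=
          Nat.findGreatest_spec (P := fun i => p ≤ i ∧ thetaGt1 v i) hmwit ⟨le_rfl, hthp⟩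
        have hmj : m ≤ j := Nat.findGreatest_le j
        have hmp : p ≤ m :=
          Nat.le_findGreatest (P := fun i => p ≤ i ∧ thetaGt1 v i) hmwit ⟨le_rfl, hthp⟩
        have hnotheta : ∀ l, m < l → l ≤ j → ¬ thetaGt1 v l := fun l h1 h2 ht =>
          Nat.findGreatest_is_greatest (P := fun i => p ≤ i ∧ thetaGt1 v i) h1 h2
            ⟨by omega, ht⟩
        have hvm : v j - v m = (j : ℤ) - m :=
          theta_segment hvmono (by omega) hmj (by omega) hnotheta
        have hedgecomp : u (j+1) ≤ v j := huvj j hpj (by omega)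
        constructor
        · intro k hpk hkj1 hepsk
          rcases Nat.lt_or_ge k (j+1) with hk | hk
          · exact ihK k hpk (by omega) hepsk
          · have hkeq : k = j + 1 := by omega
            subst hkeq
            have hedge := hstar m (j+1) (by omega) (by omega) (by omega) (by omega)
              (by omega) hmspec.2 hepsk (by push_cast; omega)
            have hMm := ihM m hmp hmj hmspec.2
            push_cast at hedge ⊢
            omega
        · intro i hpi hij1 hthi
          rcases Nat.lt_or_ge i (j+1) with hi | hi
          · exact ihM i hpi (by omega) hthi
          · have hieq : i = j + 1 := by omega
            subst hieq
            have hexk : ∃ l, j + 1 ≤ l ∧ epsGt1 u n l := ⟨q, hjq, hepsq⟩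
            set κ := Nat.find hexk with hκdef
            obtain ⟨hκ1, hκeps⟩ := Nat.find_spec hexk
            have hwq2 : (fun l => j + 1 ≤ l ∧ epsGt1 u n l) q := ⟨hjq, hepsq⟩
            have hκq : κ ≤ q := Nat.find_le hwq2
            have hκmin : ∀ l, j + 1 ≤ l → l < κ → ¬ epsGt1 u n l := fun l h1 h2 h =>
              Nat.find_min hexk h2 ⟨h1, h⟩
            have huκ : u κ - u (j+1) = (κ : ℤ) - (j+1 : ℕ) := eps_segment humono (by omega) hκ1
              (by omega) hκmin
            have huvi := huv (j+1) (by omega) (by omega)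
            have hedge1 := hstar (j+1) κ (by omega) (by omega) (by omega) (by omega) hκ1
              hthi hκeps (by push_cast at huκ ⊢; omega)
            have hedge2 := hstar m κ (by omega) (by omega) (by omega) (by omega)
              (by omega) hmspec.2 hκeps (by push_cast at huκ ⊢; omega)
            have hMm := ihM m hmp hmj hmspec.2
            push_cast at hedge1 hedge2 ⊢
            omega
    obtain ⟨mainK, mainM⟩ := main q hpq le_rfl
    refine ⟨?_, ?_, ?_⟩
    · intro i k hpi hik hkq hei hek
      have h1 := mainK i hpi (by omega) hei
      have h2 := mainK k (by omega) hkq hek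
      omega
    · intro i k hpi hik hkq hti htk
      have h1 := mainM i hpi (by omega) hti
      have h2 := mainM k (by omega) hkq htk
      omega
    · intro i0' hbm
      obtain ⟨h0p, h0q, h0eps, h0min⟩ := hbm
      have hw3 : (fun i => p ≤ i ∧ epsGt1 u n i) i0' := ⟨h0p, h0eps⟩
      have h1 : i0 ≤ i0' := Nat.find_le hw3
      have h2 : ¬ (i0 < i0') := fun h => h0min i0 hi0p h hi0eps
      have : i0' = i0 := by omega
      subst this
      omega
  · -- blocks → star
    intro hblocks i k hi1 hin hk1 hkn hik hth heps hcomp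
    have hexq : ∃ c, inC n u v c ∧ k ≤ c := ⟨n, Or.inr rfl, hkn⟩
    set q0 := Nat.find hexq with hq0def
    obtain ⟨hq0C, hkq0⟩ := Nat.find_spec hexq
    have hw4 : (fun c => inC n u v c ∧ k ≤ c) n := ⟨Or.inr rfl, hkn⟩
    have hq0n : q0 ≤ n := Nat.find_le hw4
    have hq0min : ∀ j, j < q0 → ¬ (inC n u v j ∧ k ≤ j) := fun j h => Nat.find_min hexq h
    set G := Nat.findGreatest (fun c => inC n u v c ∧ c < k) n with hGdef
    set p0 := G + 1 with hp0def
    have hGk : G < k ∧ (G = 0 ∨ inC n u v G) := by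
      rcases Nat.eq_zero_or_pos G with h | h
      · exact ⟨by omega, Or.inl h⟩
      · have := Nat.findGreatest_of_ne_zero hGdef.symm (by omega)
        exact ⟨this.2, Or.inr this.1⟩
    have hp0k : p0 ≤ k := by omega
    have hp0i : p0 ≤ i := by
      rcases hGk.2 with h | h
      · omega
      · by_contra hcon
        have hiG : i ≤ G := by omega
        rcases h with ⟨hg1, hg2, hglt⟩ | hgn
        · have hvg := gap_mono (n := n) hvmono (a := i) (b := G) hi1 hiG (by omega)
          have hug := gap_mono (n := n) humono (a := G + 1) (b := k) (by omega)
            (by omega) hkn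
          push_cast at hvg hug
          omega
        · omega
    have hisblock : IsBlock n u v p0 q0 := by
      refine ⟨by omega, by omega, hq0n, hq0C, ?_, ?_⟩
      · intro j hj1 hj2 hinCj
        rcases Nat.lt_or_ge j k with h | h
        · refine Nat.findGreatest_is_greatest (P := fun c => inC n u v c ∧ c < k)
            (n := n) ?_ (by omega) ⟨hinCj, h⟩
          rw [← hGdef]
          omega
        · exact hq0min j hj2 ⟨hinCj, h⟩
      · rcases hGk.2 with h | h
        · exact Or.inl (by omega)
        · exact Or.inr (by rwa [show p0 - 1 = G from by omega])
    obtain ⟨hA, hB, hC⟩ := hblocks p0 q0 hisblock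
    have hexi0 : ∃ l, p0 ≤ l ∧ epsGt1 u n l := ⟨k, hp0k, heps⟩
    set i0 := Nat.find hexi0 with hi0def
    obtain ⟨hi0p, hi0eps⟩ := Nat.find_spec hexi0
    have hw5 : (fun l => p0 ≤ l ∧ epsGt1 u n l) k := ⟨hp0k, heps⟩
    have hi0k : i0 ≤ k := Nat.find_le hw5
    have hi0min : ∀ j, p0 ≤ j → j < i0 → ¬ epsGt1 u n j := fun j h1 h2 h =>
      Nat.find_min hexi0 h2 ⟨h1, h⟩
    have hbm : IsBlockMin n u p0 q0 i0 := ⟨hi0p, by omega, hi0eps, hi0min⟩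
    have hrval := hC i0 hbm
    have hth0 : thetaGt1 v p0 := theta_of_block huv hisblock
    have ha := hA i0 k hi0p hi0k hkq0 hi0eps heps
    have hbth := hB p0 i le_rfl hp0i (by omega) hth0 hth
    have hui0 : u i0 - u p0 = (i0 : ℤ) - p0 := eps_segment humono (by omega) hi0p
      (by omega) hi0min
    omega

end PartTwo


theorem stmt16
    (n m : ℕ) (u v : ℕ → ℤ)
    (hn : 1 ≤ n) (hnm : n < m)
    (hu1 : u 1 = 1)
    (humono : ∀ i, 1 ≤ i → i + 1 ≤ n → u i < u (i + 1))
    (hum : u n < (m : ℤ))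
    (hv1 : 1 < v 1)
    (hvmono : ∀ i, 1 ≤ i → i + 1 ≤ n → v i < v (i + 1))
    (hvn : v n = (m : ℤ))
    (huv : ∀ i, 1 ≤ i → i ≤ n → u i < v i)
    (hstep : ∀ i, 1 ≤ i → i + 1 ≤ n → u (i + 1) ≤ v i + 1)
    (r : ℕ) (hr : 2 ≤ r) :
    IsPure ↥(PLr n u v (r : ℤ)) ↔
      ∀ p q, IsBlock n u v p q →
        ((∀ i k, p ≤ i → i ≤ k → k ≤ q → epsGt1 u n i → epsGt1 u n k →
            u k - u i = 2 * ((k : ℤ) - (i : ℤ))) ∧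
         (∀ i k, p ≤ i → i ≤ k → k ≤ q → thetaGt1 v i → thetaGt1 v k →
            v k - v i = 2 * ((k : ℤ) - (i : ℤ))) ∧
         (∀ i0, IsBlockMin n u p q i0 →
            (r : ℤ) = (v p - u p) + (i0 : ℤ) - (p : ℤ) + 1)) := by
  rw [isPure_iff_star hn humono hvmono huv (by exact_mod_cast hr)]
  exact star_iff_blocks hn humono hvmono huv

end LadderPaper
end

section
/- If the poset P_𝓛 is pure, then every maximal chain of P_𝓛 has length Δ_1 + i_1 − 2; in particular, the rank of P_𝓛 equals Δ_1 + i_1 − 2, where Δ_1 = v_1 − u_1 and i_1 = min{ i ∈ [n] : ε_i > 1 }. -/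
namespace LadderPaper

lemma atuple_eval (u : ℕ → ℤ) (n i : ℕ) (j : ℤ) (t : ℕ) (h1 : 1 ≤ t) (h2 : t ≤ n) :
    atuple u n i j t = if t < i then u t else max (j + ((t : ℤ) - (i : ℤ))) (u t) := by
  simp [atuple, h1, h2]

lemma atuple_le (u : ℕ → ℤ) (n : ℕ) {k k' : ℕ} {j j' : ℤ}
    (hk : k' ≤ k) (h : j - (k : ℤ) ≤ j' - (k' : ℤ)) :
    atuple u n k j ≤ atuple u n k' j' := by
  intro t
  unfold atuple
  by_cases h1 : 1 ≤ t ∧ t ≤ n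
  · rw [if_pos h1, if_pos h1]
    by_cases h2 : t < k
    · rw [if_pos h2]
      by_cases h3 : t < k'
      · rw [if_pos h3]
      · rw [if_neg h3]; exact le_max_right _ _
    · rw [if_neg h2, if_neg (by omega : ¬ t < k')]
      apply max_le_max _ le_rfl
      linarith
  · rw [if_neg h1, if_neg h1]

lemma mono_gap {w : ℕ → ℤ} {n : ℕ}
    (hmono : ∀ i, 1 ≤ i → i + 1 ≤ n → w i < w (i + 1)) :
    ∀ a b, 1 ≤ a → a ≤ b → b ≤ n → (b : ℤ) - (a : ℤ) ≤ w b - w a := by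
  intro a b ha
  induction b with
  | zero => intro h1 h2; omega
  | succ k ih =>
    intro hab hbn
    rcases Nat.eq_or_lt_of_le hab with heq | hlt
    · rw [← heq]; omega
    · have h1 := ih (by omega) (by omega)
      have h2 := hmono k (by omega) (by omega)
      push_cast at h1 ⊢
      omega

/-- The explicit maximal chain, parametrized by `s ∈ [1, v 1 + i1 - 2]`:
for `s ≤ i1` it is `a_{i1+1-s, i1+2-s}`, and for `s > i1` it is `a_{1, s-i1+2}`. -/
def gchain (u : ℕ → ℤ) (n i1 : ℕ) (s : ℤ) : ℕ → ℤ :=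
  if s ≤ (i1 : ℤ) then atuple u n (i1 + 1 - s.toNat) ((i1 : ℤ) + 2 - s)
  else atuple u n 1 (s - (i1 : ℤ) + 2)

theorem stmt18
    (n m : ℕ) (u v : ℕ → ℤ)
    (hn : 1 ≤ n) (hnm : n < m)
    (hu1 : u 1 = 1)
    (humono : ∀ i, 1 ≤ i → i + 1 ≤ n → u i < u (i + 1))
    (hum : u n < (m : ℤ))
    (hv1 : 1 < v 1)
    (hvmono : ∀ i, 1 ≤ i → i + 1 ≤ n → v i < v (i + 1))
    (hvn : v n = (m : ℤ))
    (huv : ∀ i, 1 ≤ i → i ≤ n → u i < v i)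
    (hstep : ∀ i, 1 ≤ i → i + 1 ≤ n → u (i + 1) ≤ v i + 1)
    (i1 : ℕ) (hi11 : 1 ≤ i1) (hi1n : i1 ≤ n) (hi1e : epsGt1 u n i1)
    (hi1min : ∀ j, 1 ≤ j → j < i1 → ¬ epsGt1 u n j)
    (hpure : IsPure ↥(PL n u v)) :
    (∀ A : Set ↥(PL n u v), IsMaxChain (· ≤ ·) A →
      (A.ncard : ℤ) = (v 1 - u 1) + (i1 : ℤ) - 1) ∧
    (∃ A : Set ↥(PL n u v), IsChain (· ≤ ·) A ∧
      (A.ncard : ℤ) = (v 1 - u 1) + (i1 : ℤ) - 1) ∧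
    (∀ A : Set ↥(PL n u v), IsChain (· ≤ ·) A →
      (A.ncard : ℤ) ≤ (v 1 - u 1) + (i1 : ℤ) - 1) := by
  classical
  have hugap := mono_gap humono
  have hvgap := mono_gap hvmono
  have hu_ge : ∀ t, 1 ≤ t → t ≤ n → (t : ℤ) ≤ u t := by
    intro t h1 h2
    have h3 := hugap 1 t le_rfl h1 h2
    rw [hu1] at h3
    push_cast at h3
    omega
  have hu_eq : ∀ k, k ≤ i1 → 1 ≤ k → u k = (k : ℤ) := by
    intro k
    induction k with
    | zero => omega
    | succ t ih =>
      intro hk h1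
      rcases Nat.eq_zero_or_pos t with rfl | ht
      · simpa using hu1
      · have h2 := ih (by omega) (by omega)
        have h3 : ¬ epsGt1 u n t := hi1min t (by omega) (by omega)
        unfold epsGt1 at h3
        push_neg at h3
        have h4 := humono t (by omega) (by omega)
        push_cast
        omega
  have hv1' : 2 ≤ v 1 := by omega
  set N : ℤ := v 1 + (i1 : ℤ) - 2 with hN
  have hNi1 : (i1 : ℤ) ≤ N := by omega
  have hN1 : 1 ≤ N := by omega
  -- monotonicity of the chain parametrization
  have hgle : ∀ s s', 1 ≤ s → s ≤ s' → s' ≤ N →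
      gchain u n i1 s ≤ gchain u n i1 s' := by
    intro s s' h1 h2 h3
    by_cases hc : s' ≤ (i1 : ℤ)
    · simp only [gchain]
      rw [if_pos (le_trans h2 hc), if_pos hc]
      exact atuple_le u n (by omega) (by omega)
    · by_cases hc2 : s ≤ (i1 : ℤ)
      · simp only [gchain]
        rw [if_pos hc2, if_neg hc]
        exact atuple_le u n (by omega) (by omega)
      · simp only [gchain]
        rw [if_neg hc2, if_neg hc]
        exact atuple_le u n le_rfl (by omega)
  -- membership of the chain in PL
  have hgmem : ∀ s, 1 ≤ s → s ≤ N → gchain u n i1 s ∈ PL n u v := by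
    intro s h1 h2
    by_cases hc : s ≤ (i1 : ℤ)
    · refine ⟨i1 + 1 - s.toNat, (i1 : ℤ) + 2 - s, by omega, by omega, ?_, ?_, ?_⟩
      · have h3 := hu_eq (i1 + 1 - s.toNat) (by omega) (by omega)
        omega
      · have h3 := hvgap 1 (i1 + 1 - s.toNat) le_rfl (by omega) (by omega)
        push_cast at h3
        omega
      · simp only [gchain]
        rw [if_pos hc]
    · refine ⟨1, s - (i1 : ℤ) + 2, le_rfl, hn, by omega, by omega, ?_⟩
      simp only [gchain]
      rw [if_neg hc]
  -- injectivity / strictness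
  have hgne : ∀ s s', 1 ≤ s → s < s' → s' ≤ N →
      gchain u n i1 s ≠ gchain u n i1 s' := by
    intro s s' h1 h2 h3 heq
    by_cases hc : s' ≤ (i1 : ℤ)
    · have hc' : s ≤ (i1 : ℤ) := by omega
      have hF := congrFun heq (i1 + 1 - s'.toNat)
      simp only [gchain] at hF
      rw [if_pos hc', if_pos hc] at hF
      rw [atuple_eval u n _ _ _ (by omega) (by omega),
          atuple_eval u n _ _ _ (by omega) (by omega)] at hF
      have huk := hu_eq (i1 + 1 - s'.toNat) (by omega) (by omega)
      simp only [max_def] at hF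
      split_ifs at hF <;> omega
    · by_cases hc2 : s ≤ (i1 : ℤ)
      · have hF := congrFun heq 1
        simp only [gchain] at hF
        rw [if_pos hc2, if_neg hc] at hF
        rw [atuple_eval u n _ _ 1 le_rfl hn, atuple_eval u n _ _ 1 le_rfl hn] at hF
        simp only [max_def] at hF
        split_ifs at hF <;> omega
      · have hF := congrFun heq 1
        simp only [gchain] at hF
        rw [if_neg hc2, if_neg hc] at hF
        rw [atuple_eval u n _ _ 1 le_rfl hn, atuple_eval u n _ _ 1 le_rfl hn] at hF
        simp only [max_def] at hF
        split_ifs at hF <;> omega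
  -- the chain as a subset of the subtype
  set A₀ : Set ↥(PL n u v) :=
    Subtype.val ⁻¹' (gchain u n i1 '' Set.Icc (1 : ℤ) N) with hA₀def
  have hmemA₀ : ∀ x : ↥(PL n u v),
      x ∈ A₀ ↔ ∃ s, (1 ≤ s ∧ s ≤ N) ∧ gchain u n i1 s = ↑x := by
    intro x
    simp only [hA₀def, Set.mem_preimage, Set.mem_image, Set.mem_Icc]
  have hchain : IsChain (· ≤ ·) A₀ := by
    rintro x hx y hy hne
    obtain ⟨s, hs, hxs⟩ := (hmemA₀ x).mp hx
    obtain ⟨s', hs', hys⟩ := (hmemA₀ y).mp hy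
    have hss : s ≠ s' := by
      rintro rfl
      exact hne (Subtype.ext (hxs.symm.trans hys))
    rcases hss.lt_or_gt with h | h
    · left
      show (x : ℕ → ℤ) ≤ (y : ℕ → ℤ)
      rw [← hxs, ← hys]
      exact hgle s s' hs.1 h.le hs'.2
    · right
      show (y : ℕ → ℤ) ≤ (x : ℕ → ℤ)
      rw [← hxs, ← hys]
      exact hgle s' s hs'.1 h.le hs.2
  -- the special element a_{1,2}
  have ha12mem : atuple u n 1 2 ∈ PL n u v := by
    refine ⟨1, 2, le_rfl, hn, ?_, ?_, rfl⟩ <;> omega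
  have hgi1 : gchain u n i1 (i1 : ℤ) = atuple u n 1 2 := by
    simp only [gchain]
    rw [if_pos le_rfl]
    have e1 : i1 + 1 - ((i1 : ℤ)).toNat = 1 := by omega
    have e2 : (i1 : ℤ) + 2 - (i1 : ℤ) = 2 := by ring
    rw [e1, e2]
  have ha12A₀ : (⟨atuple u n 1 2, ha12mem⟩ : ↥(PL n u v)) ∈ A₀ := by
    refine (hmemA₀ _).mpr ⟨(i1 : ℤ), ⟨?_, hNi1⟩, hgi1⟩
    omega
  -- maximality
  have hmax : IsMaxChain (· ≤ ·) A₀ := by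
    refine ⟨hchain, fun B hB hAB => Set.Subset.antisymm hAB fun x hxB => ?_⟩
    obtain ⟨i, j, hi1', hin', hj1, hj2, hx⟩ := x.2
    by_cases hxi : i = 1
    · subst hxi
      apply (hmemA₀ x).mpr
      by_cases hj2' : j = 2
      · refine ⟨(i1 : ℤ), ⟨?_, hNi1⟩, by rw [hgi1, hx, hj2']⟩
        omega
      · refine ⟨(i1 : ℤ) + j - 2, ⟨?_, ?_⟩, ?_⟩
        · omega
        · omega
        · simp only [gchain]
          rw [if_neg (show ¬ ((i1 : ℤ) + j - 2 ≤ (i1 : ℤ)) by omega), hx]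
          have e3 : (i1 : ℤ) + j - 2 - (i1 : ℤ) + 2 = j := by ring
          rw [e3]
    · have hi2 : 2 ≤ i := by omega
      have hne : x ≠ (⟨atuple u n 1 2, ha12mem⟩ : ↥(PL n u v)) := by
        intro hxe
        have hvx : atuple u n i j = atuple u n 1 2 := by
          rw [← hx]; exact congrArg Subtype.val hxe
        have hF := congrFun hvx 1
        rw [atuple_eval u n _ _ 1 le_rfl hn, atuple_eval u n _ _ 1 le_rfl hn] at hF
        simp only [max_def] at hF
        split_ifs at hF <;> omega
      have hcmp := hB hxB (hAB ha12A₀) hne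
      have hxle : (x : ℕ → ℤ) ≤ atuple u n 1 2 := by
        rcases hcmp with h | h
        · exact h
        · exfalso
          have h' : atuple u n 1 2 ≤ (x : ℕ → ℤ) := h
          have h1 := h' 1
          rw [hx] at h1
          rw [atuple_eval u n _ _ 1 le_rfl hn, atuple_eval u n _ _ 1 le_rfl hn] at h1
          simp only [max_def] at h1
          split_ifs at h1 <;> omega
      have hxlei := hxle i
      rw [hx] at hxlei
      have huge := hu_ge i hi1' hin'
      rw [atuple_eval u n _ _ i hi1' hin', atuple_eval u n _ _ i hi1' hin'] at hxlei
      rw [if_neg (lt_irrefl i), if_neg (by omega : ¬ i < 1)] at hxlei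
      simp only [max_def] at hxlei
      have hkey : u i = (i : ℤ) ∧ j = (i : ℤ) + 1 := by
        split_ifs at hxlei <;> omega
      obtain ⟨hui, hji⟩ := hkey
      have hii1 : i ≤ i1 := by
        by_contra hgt
        push_neg at hgt
        have e1 := hugap (i1 + 1) i (by omega) (by omega) hin'
        have e2 := hu_eq i1 le_rfl hi11
        rcases hi1e with he | he
        · omega
        · push_cast at e1
          omega
      apply (hmemA₀ x).mpr
      refine ⟨(i1 : ℤ) + 1 - i, ⟨?_, ?_⟩, ?_⟩
      · omega
      · omega
      · simp only [gchain]
        rw [if_pos (show (i1 : ℤ) + 1 - (i : ℤ) ≤ (i1 : ℤ) by omega), hx]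
        have e4 : i1 + 1 - ((i1 : ℤ) + 1 - (i : ℤ)).toNat = i := by omega
        have e5 : (i1 : ℤ) + 2 - ((i1 : ℤ) + 1 - (i : ℤ)) = j := by omega
        rw [e4, e5]
  -- cardinality of A₀
  have hinj : Set.InjOn (gchain u n i1) (Set.Icc 1 N) := by
    intro s hs s' hs' hEq
    by_contra hne
    rcases lt_or_gt_of_ne hne with h | h
    · exact hgne s s' hs.1 h hs'.2 hEq
    · exact hgne s' s hs'.1 h hs.2 hEq.symm
  have himg : Subtype.val '' A₀ = gchain u n i1 '' Set.Icc (1 : ℤ) N := by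
    apply Set.Subset.antisymm
    · rintro z ⟨x, hx, rfl⟩
      exact hx
    · rintro z hz
      have hzPL : z ∈ PL n u v := by
        obtain ⟨s, hs, rfl⟩ := hz
        exact hgmem s hs.1 hs.2
      exact ⟨⟨z, hzPL⟩, hz, rfl⟩
  have hA₀card : A₀.ncard = N.toNat := by
    rw [← Set.ncard_image_of_injective A₀ Subtype.val_injective, himg,
      Set.ncard_image_of_injOn hinj, ← Finset.coe_Icc, Set.ncard_coe_finset,
      Int.card_Icc]
    omega
  -- finiteness
  have hPLfin : (PL n u v).Finite := by
    apply Set.Finite.subset (((Set.finite_Icc 1 n).prod (Set.finite_Icc (2 : ℤ) (v n))).image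
      (fun p : ℕ × ℤ => atuple u n p.1 p.2))
    rintro x ⟨i, j, h1, h2, h3, h4, rfl⟩
    refine ⟨(i, j), ?_, rfl⟩
    simp only [Set.mem_prod, Set.mem_Icc]
    refine ⟨⟨h1, h2⟩, ?_, ?_⟩
    · have := hu_ge i h1 h2
      omega
    · have := hvgap i n h1 h2 le_rfl
      omega
  haveI : Finite ↥(PL n u v) := hPLfin.to_subtype
  -- conclusion
  have part1 : ∀ A : Set ↥(PL n u v), IsMaxChain (· ≤ ·) A →
      (A.ncard : ℤ) = (v 1 - u 1) + (i1 : ℤ) - 1 := by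
    intro A hA
    have hpA := hpure A A₀ hA hmax
    rw [hpA, hA₀card, hu1]
    omega
  refine ⟨part1, ⟨A₀, hchain, ?_⟩, ?_⟩
  · rw [hA₀card, hu1]
    omega
  · intro A hA
    obtain ⟨A', hA', hsub⟩ := hA.exists_maxChain
    have h1 := part1 A' hA'
    have h2 : A.ncard ≤ A'.ncard := Set.ncard_le_ncard hsub (Set.toFinite _)
    omega


end LadderPaper
end
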